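/- Let Θ ⊆ Δ and let I be a Θ-ideal in Φ⁺. Then the W_Θ-action on Der R preserves the logarithmic derivation module D(A_I): for every w ∈ W_Θ and every ψ ∈ D(A_I), the derivation w·ψ also lies in D(A_I). -/

import Mathlib

open scoped Classical

noncomputable section

variable (V : Type) [AddCommGroup V] [Module ℚ V]

/-- A finite reduced crystallographic root system `Φ` spanning the `ℚ`-vector space `V`,
together with a fixed system of positive roots `Pos`, the corresponding set of simple
roots `Δ`, the coroots `coroot α` (so that the reflection associated to `α` is
`x ↦ x - coroot α x • α`), and `coeff α δ`, the (unique, by linear independence of `Δ`)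
nonnegative integral coefficient of the simple root `δ` in the expression of the
positive root `α` as a combination of simple roots. -/
structure RootSystemData where
  Φ : Finset V
  Pos : Finset V
  Δ : Finset V
  coeff : V → V → ℕ
  coroot : V → V →ₗ[ℚ] ℚ
  span_eq_top : Submodule.span ℚ (Φ : Set V) = ⊤
  root_ne_zero : ∀ α ∈ Φ, α ≠ (0 : V)
  reduced : ∀ α ∈ Φ, ∀ c : ℚ, c • α ∈ Φ → c = 1 ∨ c = -1
  coroot_self : ∀ α ∈ Φ, coroot α α = 2
  reflect_mem : ∀ α ∈ Φ, ∀ β ∈ Φ, β - coroot α β • α ∈ Φ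
  crystallographic : ∀ α ∈ Φ, ∀ β ∈ Φ, ∃ n : ℤ, coroot α β = (n : ℚ)
  pos_subset : Pos ⊆ Φ
  pos_or_neg : ∀ α ∈ Φ, α ∈ Pos ∨ -α ∈ Pos
  pos_not_neg : ∀ α ∈ Pos, -α ∉ Pos
  simple_subset : Δ ⊆ Pos
  simple_indep : LinearIndependent ℚ (fun δ : (Δ : Set V) => (δ : V))
  pos_combo : ∀ α ∈ Pos, α = ∑ δ ∈ Δ, (coeff α δ : ℚ) • δ

variable {V}

/-- `I` is a lower ideal in the set `Pos` of positive roots. -/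
def IsLowerIdealOf (Pos I : Finset V) : Prop :=
  I ⊆ Pos ∧ ∀ α ∈ I, ∀ β ∈ Pos, α - β ∈ Pos → α - β ∈ I

/-- `Φ⁺_Θ`: the positive roots that are `ℤ`-linear combinations of roots in `Θ`. -/
def posThetaOf (Pos Θ : Finset V) : Finset V :=
  Pos.filter fun α => ∃ c : V → ℤ, α = ∑ δ ∈ Θ, (c δ : ℚ) • δ

/-- `I` is an upper ideal with respect to `Θ`. -/
def IsUpperIdealWrt (Pos Θ I : Finset V) : Prop :=
  ∀ α ∈ I, ∀ β ∈ posThetaOf Pos Θ, α + β ∈ Pos → α + β ∈ I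

/-- `I` is a `Θ`-ideal. -/
def IsThetaIdealOf (Pos Θ I : Finset V) : Prop :=
  IsLowerIdealOf Pos I ∧ IsUpperIdealWrt Pos Θ I ∧ posThetaOf Pos Θ ⊆ I

/-- The partial order `α ≼_Θ β`: `β - α` is a (possibly empty) sum of
positive roots belonging to `Φ⁺_Θ`. -/
def leTheta (Pos Θ : Finset V) (α β : V) : Prop :=
  ∃ m : Multiset V, (∀ γ ∈ m, γ ∈ posThetaOf Pos Θ) ∧ β - α = m.sum

/-- `Y` is a Weyl type subset of the lower ideal `I`. -/
def IsWeylType (I Y : Finset V) : Prop :=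
  Y ⊆ I ∧ (∀ α ∈ Y, ∀ β ∈ Y, α + β ∈ I → α + β ∈ Y) ∧
    ∀ γ ∈ I, ∀ δ ∈ I, γ ∉ Y → δ ∉ Y → γ + δ ∈ I → γ + δ ∉ Y

/-- `g` is the reflection `s_α` associated to the root `α`. -/
def IsReflectionOf (D : RootSystemData V) (α : V) (g : V ≃ₗ[ℚ] V) : Prop :=
  ∀ x, g x = x - D.coroot α x • α

/-- The Weyl group `W`, generated by the reflections `s_α` for `α ∈ Φ`. -/
def WeylGroup (D : RootSystemData V) : Subgroup (V ≃ₗ[ℚ] V) :=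
  Subgroup.closure {g | ∃ α ∈ D.Φ, IsReflectionOf D α g}

/-- The parabolic subgroup `W_Θ` generated by the reflections `s_α` for `α ∈ Θ`. -/
def WThetaGroup (D : RootSystemData V) (Θ : Finset V) : Subgroup (V ≃ₗ[ℚ] V) :=
  Subgroup.closure {g | ∃ α ∈ Θ, IsReflectionOf D α g}

/-- The length `ℓ(w)`: the smallest number of simple reflections needed to write `w`. -/
noncomputable def len (D : RootSystemData V) (w : V ≃ₗ[ℚ] V) : ℕ :=
  sInf {p : ℕ | ∃ l : List (V ≃ₗ[ℚ] V), l.length = p ∧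
    (∀ g ∈ l, ∃ α ∈ D.Δ, IsReflectionOf D α g) ∧ l.prod = w}

/-- `N(w) = {α ∈ Φ⁺ : w(α) ∈ Φ⁻}` (where `Φ⁻ = -Φ⁺`). -/
def negSet (D : RootSystemData V) (w : V ≃ₗ[ℚ] V) : Finset V :=
  D.Pos.filter fun α => -(w α) ∈ D.Pos

/-- `W^Θ`, the set of minimal length left coset representatives:
`{w ∈ W : ℓ(w) < ℓ(w s_α) for all α ∈ Θ}`. -/
def minCosetReps (D : RootSystemData V) (Θ : Finset V) : Set (V ≃ₗ[ℚ] V) :=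
  {w | w ∈ WeylGroup D ∧ ∀ g : V ≃ₗ[ℚ] V,
    (∃ α ∈ Θ, IsReflectionOf D α g) → len D w < len D (w * g)}

/-- The height `ht(α)` of a positive root: the sum of its coefficients over the simple roots. -/
def rootHt (D : RootSystemData V) (α : V) : ℕ := ∑ δ ∈ D.Δ, D.coeff α δ


variable {V : Type} [AddCommGroup V] [Module ℚ V] {κ : Type}

/-- The embedding of `V` as the degree-one part of the symmetric algebra
`R = Sym(V)`, realized as the polynomial ring `ℚ[X_i : i ∈ κ]` on a basis of `V`. -/
noncomputable def embR (bV : Module.Basis κ ℚ V) : V →ₗ[ℚ] MvPolynomial κ ℚ :=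
  (Finsupp.linearCombination ℚ (MvPolynomial.X : κ → MvPolynomial κ ℚ)).comp
    bV.repr.toLinearMap

/-- The algebra endomorphism of `R = Sym(V)` extending a linear automorphism `w` of `V`. -/
noncomputable def liftW (bV : Module.Basis κ ℚ V) (w : V ≃ₗ[ℚ] V) :
    MvPolynomial κ ℚ →ₐ[ℚ] MvPolynomial κ ℚ :=
  MvPolynomial.aeval fun i => embR bV (w (bV i))

/-- `ψ : R → R` is a `ℚ`-linear derivation of `R`. -/
def IsDerivFn (ψ : MvPolynomial κ ℚ → MvPolynomial κ ℚ) : Prop :=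
  IsLinearMap ℚ ψ ∧ ∀ f g, ψ (f * g) = ψ f * g + f * ψ g

/-- `ψ` belongs to the logarithmic derivation module `D(A_I)` of the ideal
arrangement `A_I`: it is a derivation of `R` with `ψ(α) ∈ Rα` for all `α ∈ I`. -/
def InLogDer (bV : Module.Basis κ ℚ V) (I : Finset V)
    (ψ : MvPolynomial κ ℚ → MvPolynomial κ ℚ) : Prop :=
  IsDerivFn ψ ∧ ∀ α ∈ I, ∃ r : MvPolynomial κ ℚ, ψ (embR bV α) = r * embR bV α

/-- The action of `w` on derivations: `(w·ψ)(f) = w(ψ(w⁻¹ f))`. -/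
noncomputable def actDer (bV : Module.Basis κ ℚ V) (w : V ≃ₗ[ℚ] V)
    (ψ : MvPolynomial κ ℚ → MvPolynomial κ ℚ) :
    MvPolynomial κ ℚ → MvPolynomial κ ℚ :=
  fun f => liftW bV w (ψ (liftW bV w⁻¹ f))

/-- The quadratic form on `V` associated to a polynomial `Q ∈ R`, by evaluation in the
coordinates of the given basis. -/
noncomputable def polyQuadForm (bV : Module.Basis κ ℚ V) (Q : MvPolynomial κ ℚ) (v : V) : ℚ :=
  MvPolynomial.eval (fun i => bV.repr v i) Q

/-- The symmetric bilinear form associated to the quadratic form of `Q` is nondegenerate. -/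
def NondegQuad (bV : Module.Basis κ ℚ V) (Q : MvPolynomial κ ℚ) : Prop :=
  ∀ v : V, (∀ u : V,
    polyQuadForm bV Q (v + u) - polyQuadForm bV Q v - polyQuadForm bV Q u = 0) → v = 0

section Aux

variable {V : Type} [AddCommGroup V] [Module ℚ V]

lemma finset_inv_maps (J : Finset V) (w : V ≃ₗ[ℚ] V)
    (h : ∀ x ∈ J, w x ∈ J) : ∀ x ∈ J, w⁻¹ x ∈ J := by
  have himg : J.image (fun x => w x) = J := by
    apply Finset.eq_of_subset_of_card_le
    · intro y hy
      obtain ⟨x, hx, rfl⟩ := Finset.mem_image.mp hy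
      exact h x hx
    · rw [Finset.card_image_of_injective _ w.injective]
  intro x hx
  rw [← himg] at hx
  obtain ⟨y, hy, hxy⟩ := Finset.mem_image.mp hx
  have : w⁻¹ x = y := by
    rw [← hxy]; exact w.symm_apply_apply y
  rwa [this]

/-- The stabilizer of a finite subset of `V` is a subgroup. -/
def finsetStab (J : Finset V) : Subgroup (V ≃ₗ[ℚ] V) where
  carrier := {w | ∀ x ∈ J, w x ∈ J}
  one_mem' := by intro x hx; simpa using hx
  mul_mem' := by intro a b ha hb x hx; exact ha _ (hb x hx)
  inv_mem' := by intro a ha; exact finset_inv_maps J a ha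

lemma neg_mem_roots (D : RootSystemData V) {α : V} (h : α ∈ D.Φ) : -α ∈ D.Φ := by
  have := D.reflect_mem α h α h
  rwa [D.coroot_self α h, show α - (2:ℚ) • α = -α by module] at this

lemma weyl_maps_roots (D : RootSystemData V) {w : V ≃ₗ[ℚ] V} (hw : w ∈ WeylGroup D) :
    ∀ x ∈ D.Φ, w x ∈ D.Φ := by
  have hle : WeylGroup D ≤ finsetStab D.Φ := by
    rw [WeylGroup, Subgroup.closure_le]
    rintro g ⟨α, hα, hg⟩ x hx
    rw [hg x]
    exact D.reflect_mem α hα x hx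
  exact hle hw

lemma weyl_finite (D : RootSystemData V) : Finite (WeylGroup D) := by
  have hf : Function.Injective
      (fun (w : WeylGroup D) => (fun x : D.Φ => (⟨(w : V ≃ₗ[ℚ] V) x,
        weyl_maps_roots D w.2 x x.2⟩ : D.Φ))) := by
    intro w₁ w₂ h
    have h2 : ∀ x ∈ (D.Φ : Set V), (w₁ : V ≃ₗ[ℚ] V) x = (w₂ : V ≃ₗ[ℚ] V) x := by
      intro x hx
      have := congrFun h ⟨x, hx⟩
      exact congrArg Subtype.val this
    have : (w₁ : V ≃ₗ[ℚ] V) = (w₂ : V ≃ₗ[ℚ] V) :=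
      LinearEquiv.toLinearMap_injective (LinearMap.ext_on D.span_eq_top h2)
    exact Subtype.ext this
  exact Finite.of_injective _ hf

lemma exists_reflection (D : RootSystemData V) {γ : V} (hγ : γ ∈ D.Φ) :
    ∃ g : V ≃ₗ[ℚ] V, IsReflectionOf D γ g := by
  have h2 := D.coroot_self γ hγ
  set f : V →ₗ[ℚ] V :=
    LinearMap.id - (LinearMap.toSpanSingleton ℚ V γ).comp (D.coroot γ) with hf
  have hfap : ∀ x, f x = x - D.coroot γ x • γ := by
    intro x; simp [hf, LinearMap.toSpanSingleton]
  have hinv : ∀ x, f (f x) = x := by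
    intro x
    rw [hfap, hfap]
    rw [map_sub, map_smul, h2, smul_eq_mul]
    module
  refine ⟨LinearEquiv.ofLinear f f ?_ ?_, ?_⟩
  · ext x; exact hinv x
  · ext x; exact hinv x
  · intro x; exact hfap x

end Aux
section Aux2

variable {V : Type} [AddCommGroup V] [Module ℚ V]

set_option maxHeartbeats 1600000 in
lemma exists_invariant_form (D : RootSystemData V) :
    ∃ B : V →ₗ[ℚ] V →ₗ[ℚ] ℚ,
      (∀ x y, B x y = B y x) ∧ (∀ x, x ≠ 0 → 0 < B x x) ∧
      (∀ γ ∈ D.Φ, ∀ x : V, D.coroot γ x * B γ γ = 2 * B x γ) := by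
  haveI : FiniteDimensional ℚ V := Module.finite_def.mpr ⟨D.Φ, D.span_eq_top⟩
  set b := Module.Basis.ofVectorSpace ℚ V with hb
  haveI : Fintype (Module.Basis.ofVectorSpaceIndex ℚ V) := FiniteDimensional.fintypeBasisIndex b
  set B0 : V →ₗ[ℚ] V →ₗ[ℚ] ℚ :=
    LinearMap.mk₂ ℚ (fun x y => ∑ i, b.repr x i * b.repr y i)
      (by intro m m' y
          simp only [map_add, Finsupp.add_apply, add_mul, Finset.sum_add_distrib])
      (by intro c m y
          simp only [map_smul, Finsupp.smul_apply, smul_eq_mul, Finset.mul_sum]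
          exact Finset.sum_congr rfl fun i _ => mul_assoc c _ _)
      (by intro m y y'
          simp only [map_add, Finsupp.add_apply, mul_add, Finset.sum_add_distrib])
      (by intro c m y
          simp only [map_smul, Finsupp.smul_apply, smul_eq_mul, Finset.mul_sum]
          exact Finset.sum_congr rfl fun i _ => mul_left_comm _ c _)
    with hB0
  have hB0ap : ∀ x y, B0 x y = ∑ i, b.repr x i * b.repr y i := fun x y => rfl
  have hB0symm : ∀ x y, B0 x y = B0 y x := by
    intro x y; rw [hB0ap, hB0ap]; exact Finset.sum_congr rfl fun i _ => mul_comm _ _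
  have hB0pos : ∀ x : V, x ≠ 0 → 0 < B0 x x := by
    intro x hx
    rw [hB0ap]
    have hne : b.repr x ≠ 0 := fun h => hx (by simpa using congrArg b.repr.symm h)
    obtain ⟨i, hi⟩ := Finsupp.ne_iff.mp hne
    apply Finset.sum_pos' (fun j _ => mul_self_nonneg _)
    exact ⟨i, Finset.mem_univ i, mul_self_pos.mpr hi⟩
  have hB0nonneg : ∀ x : V, 0 ≤ B0 x x := by
    intro x
    rw [hB0ap]
    exact Finset.sum_nonneg fun j _ => mul_self_nonneg _
  haveI : Finite (WeylGroup D) := weyl_finite D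
  haveI : Fintype (WeylGroup D) := Fintype.ofFinite _
  set B : V →ₗ[ℚ] V →ₗ[ℚ] ℚ :=
    LinearMap.mk₂ ℚ (fun x y => ∑ w : WeylGroup D, B0 ((w : V ≃ₗ[ℚ] V) x) ((w : V ≃ₗ[ℚ] V) y))
      (by intro m m' y; simp [Finset.sum_add_distrib])
      (by intro c m y; simp [Finset.mul_sum])
      (by intro m y y'; simp [Finset.sum_add_distrib])
      (by intro c m y; simp [Finset.mul_sum])
    with hB
  have hBap : ∀ x y, B x y = ∑ w : WeylGroup D,
      B0 ((w : V ≃ₗ[ℚ] V) x) ((w : V ≃ₗ[ℚ] V) y) := fun x y => rfl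
  have hBsymm : ∀ x y, B x y = B y x := by
    intro x y; rw [hBap, hBap]
    exact Finset.sum_congr rfl fun w _ => hB0symm _ _
  have hBpos : ∀ x : V, x ≠ 0 → 0 < B x x := by
    intro x hx
    rw [hBap]
    have h1 : B0 ((((1 : WeylGroup D) : V ≃ₗ[ℚ] V)) x) ((((1 : WeylGroup D) : V ≃ₗ[ℚ] V)) x)
        ≤ ∑ w : WeylGroup D, B0 ((w : V ≃ₗ[ℚ] V) x) ((w : V ≃ₗ[ℚ] V) x) :=
      Finset.single_le_sum (fun w _ => hB0nonneg _) (Finset.mem_univ _)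
    have h2 : (0:ℚ) < B0 ((((1 : WeylGroup D) : V ≃ₗ[ℚ] V)) x) ((((1 : WeylGroup D) : V ≃ₗ[ℚ] V)) x) := by
      have : (((1 : WeylGroup D) : V ≃ₗ[ℚ] V)) x = x := rfl
      rw [this]; exact hB0pos x hx
    linarith
  have hBinv : ∀ u : WeylGroup D, ∀ x y, B ((u : V ≃ₗ[ℚ] V) x) ((u : V ≃ₗ[ℚ] V) y) = B x y := by
    intro u x y
    rw [hBap, hBap]
    rw [← Equiv.sum_comp (Equiv.mulRight u)
      (fun w : WeylGroup D => B0 ((w : V ≃ₗ[ℚ] V) x) ((w : V ≃ₗ[ℚ] V) y))]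
    apply Finset.sum_congr rfl
    intro w _
    congr 1
  refine ⟨B, hBsymm, hBpos, ?_⟩
  intro γ hγ x
  obtain ⟨g, hgrefl⟩ := exists_reflection D hγ
  have hgW : g ∈ WeylGroup D := Subgroup.subset_closure ⟨γ, hγ, hgrefl⟩
  have hinv := hBinv ⟨g, hgW⟩ x γ
  have hgγ : g γ = -γ := by
    rw [hgrefl γ, D.coroot_self γ hγ]
    module
  have hgx : g x = x - D.coroot γ x • γ := hgrefl x
  rw [show ((⟨g, hgW⟩ : WeylGroup D) : V ≃ₗ[ℚ] V) = g from rfl] at hinv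
  rw [hgγ, hgx] at hinv
  simp only [map_sub, map_smul, map_neg, LinearMap.sub_apply, LinearMap.smul_apply,
    LinearMap.neg_apply, smul_eq_mul] at hinv
  have hsymm := hBsymm x γ
  have h2 := D.coroot_self γ hγ
  nlinarith [hinv, hsymm]

end Aux2
section Aux3

variable {V : Type} [AddCommGroup V] [Module ℚ V]

lemma root_sub_mem (D : RootSystemData V) {α β : V} (hα : α ∈ D.Φ) (hβ : β ∈ D.Φ)
    (h1 : β ≠ α) (h2 : β ≠ -α) (hpos : 1 ≤ D.coroot α β) : β - α ∈ D.Φ := by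
  obtain ⟨B, hsymm, hposd, hco⟩ := exists_invariant_form D
  have ha : 0 < B α α := hposd α (D.root_ne_zero α hα)
  have hb : 0 < B β β := hposd β (D.root_ne_zero β hβ)
  have hp : D.coroot α β * B α α = 2 * B β α := hco α hα β
  have hq : D.coroot β α * B β β = 2 * B α β := hco β hβ α
  have hba : B β α = B α β := hsymm β α
  -- strict Cauchy-Schwarz
  have hz : B α α • β - B α β • α ≠ 0 := by
    intro h
    have heq : B α α • β = B α β • α := sub_eq_zero.mp h
    have hβeq : β = ((B α α)⁻¹ * B α β) • α := by
      rw [mul_smul, ← heq, ← mul_smul, inv_mul_cancel₀ (ne_of_gt ha), one_smul]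
    rcases D.reduced α hα ((B α α)⁻¹ * B α β) (by rw [← hβeq]; exact hβ) with h' | h' <;>
      rw [h'] at hβeq
    · rw [one_smul] at hβeq; exact h1 hβeq
    · rw [neg_one_smul] at hβeq; exact h2 hβeq
  have hzz : 0 < B (B α α • β - B α β • α) (B α α • β - B α β • α) := hposd _ hz
  have hexp : B (B α α • β - B α β • α) (B α α • β - B α β • α)
      = B α α * (B α α * B β β - B α β * B α β) := by
    simp only [map_sub, map_smul, LinearMap.sub_apply, LinearMap.smul_apply, smul_eq_mul, hba]
    ring
  have hcs : B α β * B α β < B α α * B β β := by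
    rw [hexp] at hzz
    nlinarith
  -- integrality and sign
  obtain ⟨np, hnp⟩ := D.crystallographic α hα β hβ
  obtain ⟨nq, hnq⟩ := D.crystallographic β hβ α hα
  have hc0 : 0 < B α β := by nlinarith
  have hq0 : 0 < D.coroot β α := by nlinarith
  have hnp1 : 1 ≤ np := by exact_mod_cast hnp ▸ hpos
  have hnq1 : 1 ≤ nq := by
    have : (0:ℚ) < (nq:ℚ) := hnq ▸ hq0
    exact_mod_cast this
  have hprod : (np:ℚ) * (nq:ℚ) < 4 := by
    rw [← hnp, ← hnq]
    nlinarith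
  have hprodz : np * nq < 4 := by exact_mod_cast hprod
  have hcase : np = 1 ∨ nq = 1 := by
    by_contra hcon
    push_neg at hcon
    have h2p : 2 ≤ np := by omega
    have h2q : 2 ≤ nq := by omega
    nlinarith
  rcases hcase with h | h
  · have := D.reflect_mem α hα β hβ
    rw [hnp, h] at this
    simpa using this
  · have := D.reflect_mem β hβ α hα
    rw [hnq, h] at this
    have h3 := neg_mem_roots D this
    simpa using h3

lemma half_string (D : RootSystemData V) {δ α : V} (hδ : δ ∈ D.Φ) (hα : α ∈ D.Φ)
    (hne1 : α ≠ δ) (hne2 : α ≠ -δ) {n : ℕ} (hn : D.coroot δ α = (n : ℚ)) :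
    ∀ k : ℕ, 2 * k ≤ n + 1 → α - (k : ℚ) • δ ∈ D.Φ := by
  intro k
  induction k with
  | zero => intro _; simpa using hα
  | succ k IH =>
    intro hk
    have hβΦ : α - (k : ℚ) • δ ∈ D.Φ := IH (by omega)
    set β := α - (k : ℚ) • δ with hβ
    have hpair : D.coroot δ β = (n : ℚ) - k * 2 := by
      rw [hβ, map_sub, map_smul, hn, D.coroot_self δ hδ, smul_eq_mul]
    have hge1 : 1 ≤ D.coroot δ β := by
      rw [hpair]
      have : 2 * k + 1 ≤ n := by omega
      have hq : (2 * k + 1 : ℚ) ≤ (n : ℚ) := by exact_mod_cast this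
      push_cast at hq ⊢
      linarith
    have hβne1 : β ≠ δ := by
      intro h
      have h' : α - (k : ℚ) • δ = δ := h
      have hαδ : α = ((k : ℚ) + 1) • δ := by
        linear_combination (norm := module) h'
      rcases D.reduced δ hδ ((k : ℚ) + 1) (by rw [← hαδ]; exact hα) with h' | h' <;>
        rw [h'] at hαδ
      · rw [one_smul] at hαδ; exact hne1 hαδ
      · rw [neg_one_smul] at hαδ; exact hne2 hαδ
    have hβne2 : β ≠ -δ := by
      intro h
      have h' : α - (k : ℚ) • δ = -δ := h
      have hαδ : α = ((k : ℚ) - 1) • δ := by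
        linear_combination (norm := module) h'
      by_cases hk0 : (k : ℚ) - 1 = 0
      · rw [hk0, zero_smul] at hαδ
        exact D.root_ne_zero α hα hαδ
      rcases D.reduced δ hδ ((k : ℚ) - 1) (by rw [← hαδ]; exact hα) with h' | h' <;>
        rw [h'] at hαδ
      · rw [one_smul] at hαδ; exact hne1 hαδ
      · rw [neg_one_smul] at hαδ; exact hne2 hαδ
    have := root_sub_mem D hδ hβΦ hβne1 hβne2 hge1
    have heq : β - δ = α - ((k + 1 : ℕ) : ℚ) • δ := by
      rw [hβ]; push_cast; module
    rwa [heq] at this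

lemma string_mem (D : RootSystemData V) {δ α : V} (hδ : δ ∈ D.Φ) (hα : α ∈ D.Φ)
    (hne1 : α ≠ δ) (hne2 : α ≠ -δ) {n : ℕ} (hn : D.coroot δ α = (n : ℚ)) :
    ∀ k : ℕ, k ≤ n → α - (k : ℚ) • δ ∈ D.Φ := by
  intro k hk
  by_cases hhalf : 2 * k ≤ n + 1
  · exact half_string D hδ hα hne1 hne2 hn k hhalf
  · have hrefl : α - (n : ℚ) • δ ∈ D.Φ := by
      have := D.reflect_mem δ hδ α hα
      rwa [hn] at this
    set β := (n : ℚ) • δ - α with hβ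
    have hβΦ : β ∈ D.Φ := by
      have := neg_mem_roots D hrefl
      rwa [neg_sub] at this
    have hpair : D.coroot δ β = (n : ℚ) := by
      rw [hβ, map_sub, map_smul, hn, D.coroot_self δ hδ, smul_eq_mul]
      ring
    have hβne1 : β ≠ δ := by
      intro h
      have h' : (n : ℚ) • δ - α = δ := h
      have hαδ : α = ((n : ℚ) - 1) • δ := by
        linear_combination (norm := module) -h'
      by_cases hn0 : (n : ℚ) - 1 = 0
      · rw [hn0, zero_smul] at hαδ
        exact D.root_ne_zero α hα hαδ
      rcases D.reduced δ hδ ((n : ℚ) - 1) (by rw [← hαδ]; exact hα) with h' | h' <;>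
        rw [h'] at hαδ
      · rw [one_smul] at hαδ; exact hne1 hαδ
      · rw [neg_one_smul] at hαδ; exact hne2 hαδ
    have hβne2 : β ≠ -δ := by
      intro h
      have h' : (n : ℚ) • δ - α = -δ := h
      have hαδ : α = ((n : ℚ) + 1) • δ := by
        linear_combination (norm := module) -h'
      rcases D.reduced δ hδ ((n : ℚ) + 1) (by rw [← hαδ]; exact hα) with h' | h' <;>
        rw [h'] at hαδ
      · rw [one_smul] at hαδ; exact hne1 hαδ
      · rw [neg_one_smul] at hαδ; exact hne2 hαδ
    have hmem := half_string D hδ hβΦ hβne1 hβne2 hpair (n - k) (by omega)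
    have heq : -(β - ((n - k : ℕ) : ℚ) • δ) = α - (k : ℚ) • δ := by
      rw [hβ, Nat.cast_sub hk]
      module
    have := neg_mem_roots D hmem
    rwa [heq] at this

end Aux3
section Aux4

variable {V : Type} [AddCommGroup V] [Module ℚ V]

lemma indep_coeff_zero (D : RootSystemData V) (c : V → ℚ)
    (h : ∑ γ ∈ D.Δ, c γ • γ = 0) : ∀ γ ∈ D.Δ, c γ = 0 := by
  haveI : Fintype ((D.Δ : Set V) : Set V) := (D.Δ.finite_toSet).fintype
  have hs : ∑ γ ∈ D.Δ, c γ • γ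
      = ∑ x : (D.Δ : Set V), c (x : V) • (x : V) :=
    Finset.sum_subtype D.Δ (fun x => Finset.mem_coe.symm) (fun γ => c γ • γ)
  have h0 : ∑ x : (D.Δ : Set V), c (x : V) • (x : V) = 0 := by rw [← hs]; exact h
  intro γ hγ
  have := linearIndependent_iff'.mp D.simple_indep Finset.univ (fun x => c (x : V))
    (by simpa using h0) ⟨γ, Finset.mem_coe.mpr hγ⟩ (Finset.mem_univ _)
  exact this

lemma pos_of_string (D : RootSystemData V) {α δ : V} (hδΔ : δ ∈ D.Δ) (hαP : α ∈ D.Pos)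
    {n k : ℕ} (hend : α - (n : ℚ) • δ ∈ D.Pos) (hk : k ≤ n)
    (hx : α - (k : ℚ) • δ ∈ D.Φ) : α - (k : ℚ) • δ ∈ D.Pos := by
  rcases D.pos_or_neg _ hx with h | h
  · exact h
  exfalso
  set u := α - (n : ℚ) • δ with hu
  set v := -(α - (k : ℚ) • δ) with hv
  have hvP : v ∈ D.Pos := h
  have hcombu := D.pos_combo u hend
  have hcombv := D.pos_combo v hvP
  set c : V → ℚ := fun γ =>
    (D.coeff u γ : ℚ) + (D.coeff v γ : ℚ) - (if γ = δ then (k : ℚ) - (n : ℚ) else 0) with hc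
  have hsum : ∑ γ ∈ D.Δ, c γ • γ = 0 := by
    have hite : ∑ γ ∈ D.Δ, (if γ = δ then (k : ℚ) - (n : ℚ) else 0) • γ
        = ((k : ℚ) - (n : ℚ)) • δ := by
      rw [Finset.sum_eq_single_of_mem δ hδΔ]
      · simp
      · intro b _ hb; simp [hb]
    simp only [hc, sub_smul, add_smul, Finset.sum_sub_distrib, Finset.sum_add_distrib]
    rw [hite, ← hcombu, ← hcombv, hu, hv]
    module
  have hz := indep_coeff_zero D c hsum
  have hcoeffu : ∀ γ ∈ D.Δ, (D.coeff u γ : ℚ) = 0 := by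
    intro γ hγ
    have h1 := hz γ hγ
    rw [hc] at h1
    by_cases hγδ : γ = δ
    · subst hγδ
      simp only [eq_self_iff_true, if_true] at h1
      have hkn : (k : ℚ) ≤ (n : ℚ) := by exact_mod_cast hk
      have hnn1 : (0:ℚ) ≤ (D.coeff u γ : ℚ) := Nat.cast_nonneg _
      have hnn2 : (0:ℚ) ≤ (D.coeff v γ : ℚ) := Nat.cast_nonneg _
      linarith
    · simp only [if_neg hγδ] at h1
      have hnn2 : (0:ℚ) ≤ (D.coeff v γ : ℚ) := Nat.cast_nonneg _
      have hnn1 : (0:ℚ) ≤ (D.coeff u γ : ℚ) := Nat.cast_nonneg _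
      linarith
  have hu0 : u = 0 := by
    rw [hcombu]
    apply Finset.sum_eq_zero
    intro γ hγ
    rw [hcoeffu γ hγ, zero_smul]
  exact D.root_ne_zero u (D.pos_subset hend) hu0

end Aux4
section Aux5

variable {V : Type} [AddCommGroup V] [Module ℚ V]

lemma refl_mem_ideal (D : RootSystemData V) (Θ : Finset V) (hΘ : Θ ⊆ D.Δ)
    (I : Finset V) (hI : IsThetaIdealOf D.Pos Θ I) {δ : V} (hδ : δ ∈ Θ) {α : V} (hα : α ∈ I) :
    (α - D.coroot δ α • δ ∈ I) ∨ (-(α - D.coroot δ α • δ) ∈ I) := by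
  have hδΔ : δ ∈ D.Δ := hΘ hδ
  have hδP : δ ∈ D.Pos := D.simple_subset hδΔ
  have hδΦ : δ ∈ D.Φ := D.pos_subset hδP
  have hIP : I ⊆ D.Pos := hI.1.1
  have hαP : α ∈ D.Pos := hIP hα
  have hαΦ : α ∈ D.Φ := D.pos_subset hαP
  have hδθ : δ ∈ posThetaOf D.Pos Θ := by
    rw [posThetaOf, Finset.mem_filter]
    refine ⟨hδP, ⟨fun γ => if γ = δ then 1 else 0, ?_⟩⟩
    rw [Finset.sum_congr rfl (fun γ _ => by
      show ((if γ = δ then (1:ℤ) else 0 : ℤ) : ℚ) • γ = (if γ = δ then (1:ℚ) else 0) • γ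
      split <;> simp)]
    rw [Finset.sum_eq_single_of_mem δ hδ]
    · simp
    · intro b _ hb; simp [hb]
  by_cases hαδ : α = δ
  · right
    subst hαδ
    have heq : -(α - D.coroot α α • α) = α := by
      rw [D.coroot_self α hδΦ]; module
    rw [heq]
    exact hI.2.2 hδθ
  have hαδ2 : α ≠ -δ := by
    intro h
    rw [h] at hαP
    exact D.pos_not_neg δ hδP hαP
  obtain ⟨m, hm⟩ := D.crystallographic δ hδΦ α hαΦ
  have hsαΦ : α - D.coroot δ α • δ ∈ D.Φ := D.reflect_mem δ hδΦ α hαΦ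
  rcases D.pos_or_neg _ hsαΦ with hP | hN
  swap
  · -- negative case: forces α = δ, contradiction
    exfalso
    set v := -(α - D.coroot δ α • δ) with hv
    have hvP : v ∈ D.Pos := hN
    have hcombα := D.pos_combo α hαP
    have hcombv := D.pos_combo v hvP
    set c : V → ℚ := fun γ =>
      (D.coeff α γ : ℚ) + (D.coeff v γ : ℚ) - (if γ = δ then D.coroot δ α else 0) with hc
    have hsum : ∑ γ ∈ D.Δ, c γ • γ = 0 := by
      have hite : ∑ γ ∈ D.Δ, (if γ = δ then D.coroot δ α else 0) • γ
          = D.coroot δ α • δ := by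
        rw [Finset.sum_eq_single_of_mem δ hδΔ]
        · simp
        · intro b _ hb; simp [hb]
      simp only [hc, sub_smul, add_smul, Finset.sum_sub_distrib, Finset.sum_add_distrib]
      rw [hite, ← hcombα, ← hcombv, hv]
      module
    have hz := indep_coeff_zero D c hsum
    have hcoeffα : ∀ γ ∈ D.Δ, γ ≠ δ → (D.coeff α γ : ℚ) = 0 := by
      intro γ hγ hγδ
      have h1 := hz γ hγ
      rw [hc] at h1
      simp only [if_neg hγδ] at h1
      have hnn1 : (0:ℚ) ≤ (D.coeff α γ : ℚ) := Nat.cast_nonneg _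
      have hnn2 : (0:ℚ) ≤ (D.coeff v γ : ℚ) := Nat.cast_nonneg _
      linarith
    have hαeq : α = (D.coeff α δ : ℚ) • δ := by
      conv_lhs => rw [hcombα]
      exact Finset.sum_eq_single_of_mem δ hδΔ
        (fun b hb hbδ => by rw [hcoeffα b hb hbδ, zero_smul])
    rcases D.reduced δ hδΦ _ (by rw [← hαeq]; exact hαΦ) with h' | h'
    · rw [h', one_smul] at hαeq; exact hαδ hαeq
    · have : (0:ℚ) ≤ (D.coeff α δ : ℚ) := Nat.cast_nonneg _
      rw [h'] at this; norm_num at this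
  -- positive case
  left
  rcases le_or_gt 0 m with hm0 | hm0
  · -- m ≥ 0 : go down with the lower ideal
    set n := m.toNat with hn
    have hmn : (m : ℚ) = (n : ℚ) := by
      rw [hn]; exact_mod_cast (Int.toNat_of_nonneg hm0).symm
    have hcor : D.coroot δ α = (n : ℚ) := by rw [hm, hmn]
    have hendP : α - (n : ℚ) • δ ∈ D.Pos := by rwa [hcor] at hP
    have claim : ∀ k : ℕ, k ≤ n → α - (k : ℚ) • δ ∈ I := by
      intro k
      induction k with
      | zero => intro _; simpa using hα
      | succ k IH =>
        intro hk
        have hprev : α - (k : ℚ) • δ ∈ I := IH (by omega)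
        have hcurΦ : α - ((k+1 : ℕ) : ℚ) • δ ∈ D.Φ :=
          string_mem D hδΦ hαΦ hαδ hαδ2 hcor (k+1) hk
        have hcurP : α - ((k+1 : ℕ) : ℚ) • δ ∈ D.Pos :=
          pos_of_string D hδΔ hαP hendP hk hcurΦ
        have heq : (α - (k : ℚ) • δ) - δ = α - ((k+1 : ℕ) : ℚ) • δ := by
          push_cast; module
        have := hI.1.2 _ hprev δ hδP (by rw [heq]; exact hcurP)
        rwa [heq] at this
    have := claim n le_rfl
    rwa [← hcor] at this
  · -- m < 0 : go up with the upper ideal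
    set n := (-m).toNat with hn
    have hmn : (m : ℚ) = -(n : ℚ) := by
      rw [hn]
      have : ((-m).toNat : ℤ) = -m := Int.toNat_of_nonneg (by omega)
      have h2 : ((-m).toNat : ℚ) = ((-m : ℤ) : ℚ) := by exact_mod_cast this
      rw [h2]; push_cast; ring
    have hcor : D.coroot δ α = -(n : ℚ) := by rw [hm, hmn]
    set α' := α - D.coroot δ α • δ with hα'
    have hα'eq : α' = α + (n : ℚ) • δ := by rw [hα', hcor]; module
    have hα'P : α' ∈ D.Pos := hP
    have hα'Φ : α' ∈ D.Φ := D.pos_subset hα'P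
    have hα'ne2 : α' ≠ -δ := by
      intro h
      rw [h] at hα'P
      exact D.pos_not_neg δ hδP hα'P
    have hα'ne1 : α' ≠ δ := by
      intro h
      have h' : α + (n : ℚ) • δ = δ := by rw [← hα'eq]; exact h
      have hαeq : α = (1 - (n : ℚ)) • δ := by
        linear_combination (norm := module) h'
      by_cases hzero : (1 : ℚ) - (n : ℚ) = 0
      · rw [hzero, zero_smul] at hαeq
        exact D.root_ne_zero α hαΦ hαeq
      rcases D.reduced δ hδΦ _ (by rw [← hαeq]; exact hαΦ) with h'' | h''
      · rw [h'', one_smul] at hαeq; exact hαδ hαeq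
      · rw [h'', neg_one_smul] at hαeq; exact hαδ2 hαeq
    have hcor' : D.coroot δ α' = (n : ℚ) := by
      rw [hα'eq, map_add, map_smul, hcor, D.coroot_self δ hδΦ, smul_eq_mul]
      ring
    have hend'P : α' - (n : ℚ) • δ ∈ D.Pos := by
      have : α' - (n : ℚ) • δ = α := by rw [hα'eq]; module
      rw [this]; exact hαP
    have hn1 : 1 ≤ n := by omega
    have claim : ∀ k : ℕ, k ≤ n → α + (k : ℚ) • δ ∈ I := by
      intro k
      induction k with
      | zero => intro _; simpa using hα
      | succ k IH =>
        intro hk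
        have hprev : α + (k : ℚ) • δ ∈ I := IH (by omega)
        have hidx : n - (k+1) ≤ n := by omega
        have hcurΦ : α' - ((n - (k+1) : ℕ) : ℚ) • δ ∈ D.Φ :=
          string_mem D hδΦ hα'Φ hα'ne1 hα'ne2 hcor' (n - (k+1)) hidx
        have hcurP : α' - ((n - (k+1) : ℕ) : ℚ) • δ ∈ D.Pos :=
          pos_of_string D hδΔ hα'P hend'P hidx hcurΦ
        have heq : α' - ((n - (k+1) : ℕ) : ℚ) • δ = α + ((k : ℚ) + 1) • δ := by
          rw [hα'eq, Nat.cast_sub hk]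
          push_cast
          module
        have heq2 : (α + (k : ℚ) • δ) + δ = α + ((k : ℚ) + 1) • δ := by module
        have := hI.2.1 _ hprev δ hδθ (by rw [heq2, ← heq]; exact hcurP)
        rw [heq2] at this
        have heq3 : α + ((k : ℚ) + 1) • δ = α + ((k+1 : ℕ) : ℚ) • δ := by push_cast; module
        rwa [heq3] at this
    have := claim n le_rfl
    rw [hα'eq]
    exact this

lemma wtheta_maps_idealJ (D : RootSystemData V) (Θ : Finset V) (hΘ : Θ ⊆ D.Δ)
    (I : Finset V) (hI : IsThetaIdealOf D.Pos Θ I) {w : V ≃ₗ[ℚ] V}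
    (hw : w ∈ WThetaGroup D Θ) :
    ∀ x ∈ I ∪ I.image (fun y => -y), w x ∈ I ∪ I.image (fun y => -y) := by
  set J := I ∪ I.image (fun y => -y) with hJ
  have hle : WThetaGroup D Θ ≤ finsetStab J := by
    rw [WThetaGroup, Subgroup.closure_le]
    rintro g ⟨δ, hδ, hg⟩ x hx
    have key : ∀ y ∈ I, g y ∈ J := by
      intro y hy
      rw [hg y]
      rcases refl_mem_ideal D Θ hΘ I hI hδ hy with h | h
      · exact Finset.mem_union_left _ h
      · apply Finset.mem_union_right
        rw [Finset.mem_image]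
        exact ⟨_, h, by rw [neg_neg]⟩
    rw [hJ, Finset.mem_union] at hx
    rcases hx with hx | hx
    · exact key x hx
    · rw [Finset.mem_image] at hx
      obtain ⟨y, hy, rfl⟩ := hx
      have := key y hy
      rw [hJ, Finset.mem_union] at this ⊢
      rcases this with h | h
      · right
        rw [Finset.mem_image]
        exact ⟨g y, h, by rw [map_neg]⟩
      · left
        rw [Finset.mem_image] at h
        obtain ⟨z, hz, hzz⟩ := h
        have : g (-y) = z := by rw [map_neg, ← hzz, neg_neg]
        rwa [this]
  exact hle hw

end Aux5
section Aux6

variable {V : Type} [AddCommGroup V] [Module ℚ V] {κ : Type}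

lemma embR_basis (bV : Module.Basis κ ℚ V) (i : κ) : embR bV (bV i) = MvPolynomial.X i := by
  rw [embR]
  simp [Module.Basis.repr_self, Finsupp.linearCombination_single]

lemma liftW_X (bV : Module.Basis κ ℚ V) (w : V ≃ₗ[ℚ] V) (i : κ) :
    liftW bV w (MvPolynomial.X i) = embR bV (w (bV i)) := by
  rw [liftW, MvPolynomial.aeval_X]

lemma liftW_embR (bV : Module.Basis κ ℚ V) (w : V ≃ₗ[ℚ] V) (x : V) :
    liftW bV w (embR bV x) = embR bV (w x) := by
  have h : ((liftW bV w).toLinearMap.comp (embR bV)) = (embR bV).comp (w : V →ₗ[ℚ] V) := by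
    apply bV.ext
    intro i
    simp only [LinearMap.comp_apply, AlgHom.toLinearMap_apply, LinearEquiv.coe_coe]
    rw [embR_basis, liftW_X]
  exact LinearMap.congr_fun h x

lemma liftW_mul (bV : Module.Basis κ ℚ V) (w u : V ≃ₗ[ℚ] V) (f : MvPolynomial κ ℚ) :
    liftW bV w (liftW bV u f) = liftW bV (w * u) f := by
  have h : (liftW bV w).comp (liftW bV u) = liftW bV (w * u) := by
    apply MvPolynomial.algHom_ext
    intro i
    rw [AlgHom.comp_apply, liftW_X, liftW_embR, liftW_X]
    rfl
  exact AlgHom.congr_fun h f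

lemma liftW_one (bV : Module.Basis κ ℚ V) (f : MvPolynomial κ ℚ) :
    liftW bV (1 : V ≃ₗ[ℚ] V) f = f := by
  have h : liftW bV (1 : V ≃ₗ[ℚ] V) = AlgHom.id ℚ (MvPolynomial κ ℚ) := by
    apply MvPolynomial.algHom_ext
    intro i
    rw [liftW_X]
    exact embR_basis bV i
  rw [h]; rfl

lemma liftW_cancel (bV : Module.Basis κ ℚ V) (w : V ≃ₗ[ℚ] V) (f : MvPolynomial κ ℚ) :
    liftW bV w (liftW bV w⁻¹ f) = f := by
  rw [liftW_mul, mul_inv_cancel, liftW_one]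

end Aux6

/-- Let `Θ ⊆ Δ` and let `I` be a `Θ`-ideal in `Φ⁺`. Then the
`W_Θ`-action on `Der R` preserves the logarithmic derivation module `D(A_I)`:
for every `w ∈ W_Θ` and every `ψ ∈ D(A_I)`, the derivation `w·ψ` also lies in `D(A_I)`. -/
theorem actDer_mem_logDer
    (D : RootSystemData V) (bV : Module.Basis κ ℚ V)
    (Θ : Finset V) (hΘ : Θ ⊆ D.Δ)
    (I : Finset V) (hI : IsThetaIdealOf D.Pos Θ I)
    (w : V ≃ₗ[ℚ] V) (hw : w ∈ WThetaGroup D Θ)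
    (ψ : MvPolynomial κ ℚ → MvPolynomial κ ℚ) (hψ : InLogDer bV I ψ) :
    InLogDer bV I (actDer bV w ψ) := by
  obtain ⟨⟨hlin, hleib⟩, hroot⟩ := hψ
  constructor
  · constructor
    · constructor
      · intro f g
        show liftW bV w (ψ (liftW bV w⁻¹ (f + g)))
            = liftW bV w (ψ (liftW bV w⁻¹ f)) + liftW bV w (ψ (liftW bV w⁻¹ g))
        rw [map_add (liftW bV w⁻¹), hlin.map_add, map_add]
      · intro c f
        show liftW bV w (ψ (liftW bV w⁻¹ (c • f))) = c • liftW bV w (ψ (liftW bV w⁻¹ f))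
        rw [map_smul (liftW bV w⁻¹), hlin.map_smul, map_smul]
    · intro f g
      show liftW bV w (ψ (liftW bV w⁻¹ (f * g)))
          = liftW bV w (ψ (liftW bV w⁻¹ f)) * g + f * liftW bV w (ψ (liftW bV w⁻¹ g))
      rw [map_mul (liftW bV w⁻¹), hleib, map_add, map_mul, map_mul,
        liftW_cancel bV w f, liftW_cancel bV w g]
  · intro α hαI
    have hw' : w⁻¹ ∈ WThetaGroup D Θ := (WThetaGroup D Θ).inv_mem hw
    have hJ := wtheta_maps_idealJ D Θ hΘ I hI hw' α
      (Finset.mem_union_left _ hαI)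
    have hww : ∀ x : V, w ((w⁻¹ : V ≃ₗ[ℚ] V) x) = x := fun x => w.apply_symm_apply x
    show ∃ r, liftW bV w (ψ (liftW bV w⁻¹ (embR bV α))) = r * embR bV α
    rw [liftW_embR]
    rcases Finset.mem_union.mp hJ with h | h
    · obtain ⟨r, hr⟩ := hroot _ h
      refine ⟨liftW bV w r, ?_⟩
      rw [hr, map_mul, liftW_embR, hww]
    · obtain ⟨y, hyI, hyneg⟩ := Finset.mem_image.mp h
      obtain ⟨r, hr⟩ := hroot y hyI
      refine ⟨liftW bV w r, ?_⟩
      have h1 : embR bV ((w⁻¹ : V ≃ₗ[ℚ] V) α) = -embR bV y := by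
        rw [← hyneg, map_neg]
      have hwy : w y = -α := by
        have hy : y = -((w⁻¹ : V ≃ₗ[ℚ] V) α) := by rw [← hyneg, neg_neg]
        rw [hy, map_neg, hww]
      rw [h1, hlin.map_neg, map_neg, hr, map_mul, liftW_embR, hwy, map_neg]
      ring

end
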